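/- Let Γ denote the Gamma function, let H ∈ (1/2, 1), set c_H = √(2H·Γ(3/2−H) / (Γ(1/2+H)·Γ(2−2H))), let s < T be real numbers, and let g ∈ L²(s, T). Define (G_H g)(τ) = c_H (H−1/2) ∫_τ^T (t−τ)^{H−3/2} g(t) dt for τ ∈ (s, T). Then G_H g ∈ L²(s, T) and ‖G_H g‖_{L²(s,T)} ≤ c_H (T−s)^{H−1/2} ‖g‖_{L²(s,T)}. -/

import Mathlib

open Real MeasureTheory Set
open scoped ENNReal NNReal

noncomputable def cH (H : ℝ) : ℝ :=
  Real.sqrt (2 * H * Real.Gamma (3/2 - H) / (Real.Gamma (1/2 + H) * Real.Gamma (2 - 2*H)))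

noncomputable def GH (H s T : ℝ) (g : ℝ → ℝ) (τ : ℝ) : ℝ :=
  cH H * (H - 1/2) * ∫ t in Set.Ioc τ T, (t - τ) ^ (H - 3/2) * g t

lemma lint_ker {a : ℝ} (ha : -1 < a) {u v : ℝ} (huv : u ≤ v) :
    ∫⁻ t in Set.Ioc u v, ENNReal.ofReal ((t - u) ^ a)
      = ENNReal.ofReal ((v - u) ^ (a+1) / (a+1)) := by
  have hII : IntervalIntegrable (fun t => (t - u) ^ a) volume u v := by
    have := (intervalIntegral.intervalIntegrable_rpow' (a := 0) (b := v - u) ha).comp_sub_right u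
    simpa using this
  have hInt : IntegrableOn (fun t => (t - u) ^ a) (Set.Ioc u v) volume :=
    (intervalIntegrable_iff_integrableOn_Ioc_of_le huv).mp hII
  have hnn : 0 ≤ᵐ[volume.restrict (Set.Ioc u v)] fun t => (t - u) ^ a := by
    filter_upwards [ae_restrict_mem measurableSet_Ioc] with t ht
    exact Real.rpow_nonneg (by linarith [ht.1]) a
  rw [← ofReal_integral_eq_lintegral_ofReal hInt hnn]
  congr 1
  rw [← intervalIntegral.integral_of_le huv]
  have : (∫ t in u..v, (t - u) ^ a) = ∫ x in (u-u)..(v-u), x ^ a :=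
    intervalIntegral.integral_comp_sub_right (fun x => x ^ a) u
  rw [this, sub_self, integral_rpow (Or.inl ha), Real.zero_rpow (by linarith)]
  ring_nf

lemma lint_ker' {a : ℝ} (ha : -1 < a) {u v : ℝ} (huv : u ≤ v) :
    ∫⁻ t in Set.Ioc u v, ENNReal.ofReal ((v - t) ^ a)
      = ENNReal.ofReal ((v - u) ^ (a+1) / (a+1)) := by
  have hII : IntervalIntegrable (fun t => (v - t) ^ a) volume u v := by
    have := (intervalIntegral.intervalIntegrable_rpow' (a := 0) (b := v - u) ha).comp_sub_left v
    simpa using this.symm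
  have hInt : IntegrableOn (fun t => (v - t) ^ a) (Set.Ioc u v) volume :=
    (intervalIntegrable_iff_integrableOn_Ioc_of_le huv).mp hII
  have hnn : 0 ≤ᵐ[volume.restrict (Set.Ioc u v)] fun t => (v - t) ^ a := by
    filter_upwards [ae_restrict_mem measurableSet_Ioc] with t ht
    exact Real.rpow_nonneg (by linarith [ht.2]) a
  rw [← ofReal_integral_eq_lintegral_ofReal hInt hnn]
  congr 1
  rw [← intervalIntegral.integral_of_le huv]
  have : (∫ t in u..v, (v - t) ^ a) = ∫ x in (v-v)..(v-u), x ^ a :=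
    intervalIntegral.integral_comp_sub_left (fun x => x ^ a) v
  rw [this, sub_self, integral_rpow (Or.inl ha), Real.zero_rpow (by linarith)]
  ring_nf

lemma GH_main (H : ℝ) (hH : H ∈ Set.Ioo (1/2 : ℝ) 1) (s T : ℝ) (hsT : s < T)
    (g : ℝ → ℝ) (hgm : Measurable g) :
    ∫⁻ τ in Set.Ioo s T, (‖GH H s T g τ‖₊ : ℝ≥0∞) ^ (2:ℝ)
      ≤ (ENNReal.ofReal (cH H * (T - s) ^ (H - 1/2))) ^ (2:ℝ) *
        ∫⁻ t in Set.Ioo s T, (‖g t‖₊ : ℝ≥0∞) ^ (2:ℝ) := by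
  obtain ⟨hH1, hH2⟩ := hH
  have ha : (-1:ℝ) < H - 3/2 := by linarith
  have hp : (0:ℝ) < H - 1/2 := by linarith
  have hcH : 0 ≤ cH H := Real.sqrt_nonneg _
  set a : ℝ := H - 3/2 with ha_def
  have ha1 : a + 1 = H - 1/2 := by ring
  set K : ℝ := (T - s) ^ (H - 1/2) / (H - 1/2) with hK_def
  have hK0 : 0 ≤ K := div_nonneg (Real.rpow_nonneg (by linarith) _) hp.le
  set k : ℝ → ℝ≥0∞ := fun x => ENNReal.ofReal (x ^ a) with hk_def
  have hk : Measurable k := ENNReal.measurable_ofReal.comp (measurable_id.pow measurable_const)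
  set Gq : ℝ → ℝ≥0∞ := fun t => ENNReal.ofReal |g t| with hGq_def
  have hGq : Measurable Gq := ENNReal.measurable_ofReal.comp hgm.abs
  set C : ℝ≥0∞ := ENNReal.ofReal (cH H * (H - 1/2)) with hC_def
  -- Step A : pointwise bound
  have hA : ∀ τ : ℝ, (‖GH H s T g τ‖₊ : ℝ≥0∞) ≤ C * ∫⁻ t in Set.Ioc τ T, k (t - τ) * Gq t := by
    intro τ
    rw [← enorm_eq_nnnorm, Real.enorm_eq_ofReal_abs, GH]
    have habs : |cH H * (H - 1/2) * ∫ t in Set.Ioc τ T, (t - τ) ^ (H - 3/2) * g t|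
        = (cH H * (H - 1/2)) * |∫ t in Set.Ioc τ T, (t - τ) ^ (H - 3/2) * g t| := by
      rw [abs_mul, abs_of_nonneg (by positivity)]
    rw [habs, ENNReal.ofReal_mul (by positivity)]
    refine mul_le_mul_right ?_ C
    have h1 : |∫ t in Set.Ioc τ T, (t - τ) ^ (H - 3/2) * g t|
        ≤ (∫⁻ t in Set.Ioc τ T, ENNReal.ofReal ‖(t - τ) ^ (H - 3/2) * g t‖).toReal := by
      simpa [Real.norm_eq_abs] using
        norm_integral_le_lintegral_norm (μ := volume.restrict (Set.Ioc τ T))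
          (fun t => (t - τ) ^ (H - 3/2) * g t)
    have h2 : (∫⁻ t in Set.Ioc τ T, ENNReal.ofReal ‖(t - τ) ^ (H - 3/2) * g t‖)
        = ∫⁻ t in Set.Ioc τ T, k (t - τ) * Gq t := by
      refine setLIntegral_congr_fun measurableSet_Ioc ?_
      intro t ht
      beta_reduce
      have h3 : (0:ℝ) ≤ (t - τ) ^ (H - 3/2) := Real.rpow_nonneg (by linarith [ht.1]) _
      rw [Real.norm_eq_abs, abs_mul, abs_of_nonneg h3, ENNReal.ofReal_mul h3]
    calc ENNReal.ofReal |∫ t in Set.Ioc τ T, (t - τ) ^ (H - 3/2) * g t|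
        ≤ ENNReal.ofReal ((∫⁻ t in Set.Ioc τ T, ENNReal.ofReal ‖(t - τ) ^ (H - 3/2) * g t‖).toReal) :=
          ENNReal.ofReal_le_ofReal h1
      _ ≤ ∫⁻ t in Set.Ioc τ T, ENNReal.ofReal ‖(t - τ) ^ (H - 3/2) * g t‖ :=
          ENNReal.ofReal_toReal_le
      _ = _ := h2
  -- Step B : Cauchy-Schwarz
  have hB : ∀ τ ∈ Set.Ioo s T, (∫⁻ t in Set.Ioc τ T, k (t - τ) * Gq t) ^ (2:ℝ)
      ≤ ENNReal.ofReal K * ∫⁻ t in Set.Ioc τ T, k (t - τ) * Gq t ^ (2:ℝ) := by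
    intro τ hτ
    obtain ⟨hτ1, hτ2⟩ := hτ
    have hmk : Measurable fun t => k (t - τ) := hk.comp (measurable_id.sub measurable_const)
    have hCS := ENNReal.lintegral_mul_le_Lp_mul_Lq (volume.restrict (Set.Ioc τ T))
      (show Real.HolderConjugate 2 2 from Real.HolderConjugate.two_two)
      (f := fun t => k (t - τ) ^ (1/2 : ℝ)) (g := fun t => k (t - τ) ^ (1/2 : ℝ) * Gq t)
      (hmk.pow measurable_const).aemeasurable
      ((hmk.pow measurable_const).mul hGq).aemeasurable
    have e1 : ∀ t : ℝ, (fun t => k (t - τ) ^ (1/2 : ℝ)) t *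
        (fun t => k (t - τ) ^ (1/2 : ℝ) * Gq t) t = k (t - τ) * Gq t := by
      intro t
      simp only [← mul_assoc, ← ENNReal.rpow_add_of_nonneg _ _ (by norm_num : (0:ℝ) ≤ 1/2)
        (by norm_num : (0:ℝ) ≤ 1/2)]
      norm_num
    have e2 : ∀ t : ℝ, (k (t - τ) ^ (1/2 : ℝ)) ^ (2:ℝ) = k (t - τ) := by
      intro t
      rw [← ENNReal.rpow_mul]
      norm_num
    have e3 : ∀ t : ℝ, (k (t - τ) ^ (1/2 : ℝ) * Gq t) ^ (2:ℝ)
        = k (t - τ) * Gq t ^ (2:ℝ) := by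
      intro t
      rw [ENNReal.mul_rpow_of_nonneg _ _ (by norm_num : (0:ℝ) ≤ 2), e2]
    simp only [Pi.mul_apply, e1, e2, e3] at hCS
    have hAτ : (∫⁻ t in Set.Ioc τ T, k (t - τ)) ≤ ENNReal.ofReal K := by
      have hval : (∫⁻ t in Set.Ioc τ T, k (t - τ))
          = ENNReal.ofReal ((T - τ) ^ (H - 1/2) / (H - 1/2)) := by
        rw [← ha1]; exact lint_ker ha (le_of_lt hτ2)
      rw [hval]
      apply ENNReal.ofReal_le_ofReal
      rw [hK_def]
      gcongr <;> linarith
    calc (∫⁻ t in Set.Ioc τ T, k (t - τ) * Gq t) ^ (2:ℝ)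
        ≤ ((∫⁻ t in Set.Ioc τ T, k (t - τ)) ^ (1/2:ℝ) *
            (∫⁻ t in Set.Ioc τ T, k (t - τ) * Gq t ^ (2:ℝ)) ^ (1/2:ℝ)) ^ (2:ℝ) :=
          ENNReal.rpow_le_rpow hCS (by norm_num)
      _ = (∫⁻ t in Set.Ioc τ T, k (t - τ)) *
            (∫⁻ t in Set.Ioc τ T, k (t - τ) * Gq t ^ (2:ℝ)) := by
          rw [ENNReal.mul_rpow_of_nonneg _ _ (by norm_num : (0:ℝ) ≤ 2),
            ← ENNReal.rpow_mul, ← ENNReal.rpow_mul]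
          norm_num
      _ ≤ ENNReal.ofReal K * ∫⁻ t in Set.Ioc τ T, k (t - τ) * Gq t ^ (2:ℝ) :=
          mul_le_mul_left hAτ _
  -- Step C : Fubini / Schur
  set F : ℝ → ℝ → ℝ≥0∞ :=
    fun τ t => (Set.Ioi τ).indicator (fun t' => k (t' - τ)) t * Gq t ^ (2:ℝ) with hF_def
  have hFm : Measurable (Function.uncurry F) := by
    have he : Function.uncurry F = fun p : ℝ × ℝ =>
        ({q : ℝ × ℝ | q.1 < q.2}.indicator (fun q => k (q.2 - q.1)) p) * Gq p.2 ^ (2:ℝ) := by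
      funext p
      simp [Function.uncurry, hF_def, Set.indicator_apply, Set.mem_Ioi, Set.mem_setOf_eq]
    rw [he]
    exact ((Measurable.indicator (hk.comp (measurable_snd.sub measurable_fst))
      (measurableSet_lt measurable_fst measurable_snd)).mul
      ((hGq.comp measurable_snd).pow measurable_const))
  have hC : (∫⁻ τ in Set.Ioo s T, ∫⁻ t in Set.Ioc τ T, k (t - τ) * Gq t ^ (2:ℝ))
      ≤ ENNReal.ofReal K * ∫⁻ t in Set.Ioo s T, Gq t ^ (2:ℝ) := by
    have hrw : ∀ τ ∈ Set.Ioo s T,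
        (∫⁻ t in Set.Ioc τ T, k (t - τ) * Gq t ^ (2:ℝ))
          = ∫⁻ t in Set.Ioc s T, F τ t := by
      intro τ hτ
      have h1 : ∀ t : ℝ, F τ t
          = (Set.Ioi τ).indicator (fun t' => k (t' - τ) * Gq t' ^ (2:ℝ)) t := by
        intro t
        by_cases h : t ∈ Set.Ioi τ
        · simp only [hF_def, Set.indicator_of_mem h]
        · simp only [hF_def, Set.indicator_of_notMem h, zero_mul]
      rw [lintegral_congr h1, lintegral_indicator measurableSet_Ioi,
        Measure.restrict_restrict measurableSet_Ioi]
      have h2 : Set.Ioi τ ∩ Set.Ioc s T = Set.Ioc τ T := by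
        ext x
        simp only [Set.mem_inter_iff, Set.mem_Ioi, Set.mem_Ioc]
        constructor
        · rintro ⟨hx1, _, hx3⟩; exact ⟨hx1, hx3⟩
        · rintro ⟨hx1, hx2⟩; exact ⟨hx1, lt_trans hτ.1 hx1, hx2⟩
      rw [h2]
    have hswap := lintegral_lintegral_swap (μ := volume.restrict (Set.Ioo s T))
      (ν := volume.restrict (Set.Ioc s T)) hFm.aemeasurable
    have hinner : ∀ t ∈ Set.Ioc s T,
        (∫⁻ τ in Set.Ioo s T, F τ t) ≤ ENNReal.ofReal K * Gq t ^ (2:ℝ) := by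
      intro t ht
      have h1 : ∀ τ : ℝ, F τ t
          = (Set.Iio t).indicator (fun τ' => k (t - τ')) τ * Gq t ^ (2:ℝ) := by
        intro τ
        simp [hF_def, Set.indicator_apply, Set.mem_Ioi, Set.mem_Iio]
      have hmI : Measurable fun τ : ℝ => (Set.Iio t).indicator (fun τ' => k (t - τ')) τ :=
        Measurable.indicator (hk.comp (measurable_const.sub measurable_id)) measurableSet_Iio
      rw [lintegral_congr h1, lintegral_mul_const _ hmI]
      refine mul_le_mul_left ?_ _
      rw [lintegral_indicator measurableSet_Iio, Measure.restrict_restrict measurableSet_Iio]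
      have hsub : Set.Iio t ∩ Set.Ioo s T ⊆ Set.Ioc s t := by
        rintro x ⟨hx1, hx2, _⟩; exact ⟨hx2, le_of_lt hx1⟩
      calc ∫⁻ τ in Set.Iio t ∩ Set.Ioo s T, k (t - τ)
          ≤ ∫⁻ τ in Set.Ioc s t, k (t - τ) := lintegral_mono_set hsub
        _ = ENNReal.ofReal ((t - s) ^ (H - 1/2) / (H - 1/2)) := by
            rw [← ha1]; exact lint_ker' ha (le_of_lt ht.1)
        _ ≤ ENNReal.ofReal K := by
            apply ENNReal.ofReal_le_ofReal
            rw [hK_def]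
            gcongr <;> linarith [ht.1, ht.2]
    calc (∫⁻ τ in Set.Ioo s T, ∫⁻ t in Set.Ioc τ T, k (t - τ) * Gq t ^ (2:ℝ))
        = ∫⁻ τ in Set.Ioo s T, ∫⁻ t in Set.Ioc s T, F τ t :=
          setLIntegral_congr_fun measurableSet_Ioo hrw
      _ = ∫⁻ t in Set.Ioc s T, ∫⁻ τ in Set.Ioo s T, F τ t := hswap
      _ ≤ ∫⁻ t in Set.Ioc s T, ENNReal.ofReal K * Gq t ^ (2:ℝ) :=
          setLIntegral_mono_ae (by fun_prop) (Filter.Eventually.of_forall hinner)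
      _ = ENNReal.ofReal K * ∫⁻ t in Set.Ioc s T, Gq t ^ (2:ℝ) :=
          lintegral_const_mul' _ _ ENNReal.ofReal_ne_top
      _ = ENNReal.ofReal K * ∫⁻ t in Set.Ioo s T, Gq t ^ (2:ℝ) := by
          rw [Measure.restrict_congr_set Ioo_ae_eq_Ioc]
  -- assemble
  have hsq : ∀ x : ℝ≥0∞, x ^ (2:ℝ) = x * x := fun x => by
    rw [show (2:ℝ) = ((2:ℕ):ℝ) by norm_num, ENNReal.rpow_natCast, sq]
  have hCK : C * ENNReal.ofReal K = ENNReal.ofReal (cH H * (T - s) ^ (H - 1/2)) := by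
    rw [hC_def, ← ENNReal.ofReal_mul (by positivity)]
    congr 1
    rw [hK_def, mul_assoc, mul_comm (H - 1/2), div_mul_cancel₀ _ (ne_of_gt hp)]
  calc ∫⁻ τ in Set.Ioo s T, (‖GH H s T g τ‖₊ : ℝ≥0∞) ^ (2:ℝ)
      ≤ ∫⁻ τ in Set.Ioo s T, (C * ∫⁻ t in Set.Ioc τ T, k (t - τ) * Gq t) ^ (2:ℝ) :=
        lintegral_mono fun τ => ENNReal.rpow_le_rpow (hA τ) (by norm_num)
    _ = ∫⁻ τ in Set.Ioo s T,
          C ^ (2:ℝ) * (∫⁻ t in Set.Ioc τ T, k (t - τ) * Gq t) ^ (2:ℝ) := by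
        simp only [ENNReal.mul_rpow_of_nonneg _ _ (by norm_num : (0:ℝ) ≤ 2)]
    _ = C ^ (2:ℝ) * ∫⁻ τ in Set.Ioo s T,
          (∫⁻ t in Set.Ioc τ T, k (t - τ) * Gq t) ^ (2:ℝ) :=
        lintegral_const_mul' _ _
          (by rw [hsq]; exact ENNReal.mul_ne_top ENNReal.ofReal_ne_top ENNReal.ofReal_ne_top)
    _ ≤ C ^ (2:ℝ) * ∫⁻ τ in Set.Ioo s T,
          (ENNReal.ofReal K * ∫⁻ t in Set.Ioc τ T, k (t - τ) * Gq t ^ (2:ℝ)) :=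
        mul_le_mul_right
          (lintegral_mono_ae (by
            filter_upwards [ae_restrict_mem measurableSet_Ioo] with τ hτ using hB τ hτ)) _
    _ = C ^ (2:ℝ) * (ENNReal.ofReal K *
          ∫⁻ τ in Set.Ioo s T, ∫⁻ t in Set.Ioc τ T, k (t - τ) * Gq t ^ (2:ℝ)) := by
        rw [lintegral_const_mul' _ _ ENNReal.ofReal_ne_top]
    _ ≤ C ^ (2:ℝ) * (ENNReal.ofReal K *
          (ENNReal.ofReal K * ∫⁻ t in Set.Ioo s T, Gq t ^ (2:ℝ))) :=
        mul_le_mul_right (mul_le_mul_right hC _) _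
    _ = (C * ENNReal.ofReal K) ^ (2:ℝ) * ∫⁻ t in Set.Ioo s T, Gq t ^ (2:ℝ) := by
        simp only [hsq]; ring
    _ = (ENNReal.ofReal (cH H * (T - s) ^ (H - 1/2))) ^ (2:ℝ) *
          ∫⁻ t in Set.Ioo s T, (‖g t‖₊ : ℝ≥0∞) ^ (2:ℝ) := by
        rw [hCK]
        congr 1
        exact lintegral_congr fun t => by simp only [hGq_def, ← enorm_eq_nnnorm, Real.enorm_eq_ofReal_abs]

lemma GH_congr (H s T : ℝ) (hsT : s < T) (g g' : ℝ → ℝ)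
    (hae : g =ᵐ[volume.restrict (Set.Ioo s T)] g') :
    GH H s T g =ᵐ[volume.restrict (Set.Ioo s T)] GH H s T g' := by
  obtain ⟨N, hNsub, hNm, hN0⟩ := exists_measurable_superset_of_null (ae_iff.mp hae)
  rw [Measure.restrict_apply hNm] at hN0
  have key : ∀ τ ∈ Set.Ioo s T, GH H s T g τ = GH H s T g' τ := by
    intro τ hτ
    unfold GH
    congr 1
    refine integral_congr_ae ?_
    have hnull : volume ((N ∪ {T}) ∩ Set.Ioc τ T) = 0 := by
      refine measure_mono_null ?_ (measure_union_null hN0 (measure_singleton T))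
      rintro x ⟨hx1 | hx1, hx2⟩
      · by_cases hxT : x = T
        · exact Or.inr (by simp [hxT])
        · exact Or.inl ⟨hx1, lt_trans hτ.1 hx2.1, lt_of_le_of_ne hx2.2 hxT⟩
      · exact Or.inr hx1
    have hmem : ∀ᵐ t ∂volume.restrict (Set.Ioc τ T), t ∉ N ∪ {T} := by
      rw [ae_iff]
      simp only [not_not, Set.setOf_mem_eq]
      rw [Measure.restrict_apply (hNm.union (measurableSet_singleton T))]
      exact hnull
    filter_upwards [hmem] with t ht
    have : g t = g' t := by
      by_contra hne
      exact ht (Or.inl (hNsub hne))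
    rw [this]
  filter_upwards [ae_restrict_mem measurableSet_Ioo] with τ hτ using key τ hτ

lemma GH_meas (H s T : ℝ) (g : ℝ → ℝ) (hgm : Measurable g) :
    Measurable (GH H s T g) := by
  have hset : MeasurableSet {q : ℝ × ℝ | q.1 < q.2 ∧ q.2 ≤ T} :=
    (measurableSet_lt measurable_fst measurable_snd).inter (measurable_snd measurableSet_Iic)
  set Fm : ℝ × ℝ → ℝ :=
    {q : ℝ × ℝ | q.1 < q.2 ∧ q.2 ≤ T}.indicator (fun q => (q.2 - q.1) ^ (H - 3/2) * g q.2)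
    with hFm_def
  have hFsm : StronglyMeasurable Fm :=
    (Measurable.indicator (((measurable_snd.sub measurable_fst).pow measurable_const).mul
      (hgm.comp measurable_snd)) hset).stronglyMeasurable
  have h2 : StronglyMeasurable fun τ => ∫ t, Fm (τ, t) ∂volume :=
    hFsm.integral_prod_right'
  have h1 : GH H s T g = fun τ => cH H * (H - 1/2) * ∫ t, Fm (τ, t) ∂volume := by
    funext τ
    unfold GH
    congr 1
    rw [← integral_indicator measurableSet_Ioc]
    congr 1
  rw [h1]
  exact (measurable_const.mul h2.measurable)

theorem GH_bound (H : ℝ) (hH : H ∈ Set.Ioo (1/2 : ℝ) 1) (s T : ℝ) (hsT : s < T)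
    (g : ℝ → ℝ) (hg : MeasureTheory.MemLp g 2 (volume.restrict (Set.Ioo s T))) :
    MeasureTheory.MemLp (GH H s T g) 2 (volume.restrict (Set.Ioo s T)) ∧
    eLpNorm (GH H s T g) 2 (volume.restrict (Set.Ioo s T))
      ≤ ENNReal.ofReal (cH H * (T - s) ^ (H - 1/2)) *
        eLpNorm g 2 (volume.restrict (Set.Ioo s T)) := by
  obtain ⟨g', hg'sm, hgg'⟩ := hg.1
  have hg'm : Measurable g' := hg'sm.measurable
  have hGHeq := GH_congr H s T hsT g g' hgg'
  have hmain := GH_main H hH s T hsT g' hg'm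
  have hsnorm : ∀ f : ℝ → ℝ, eLpNorm f 2 (volume.restrict (Set.Ioo s T))
      = (∫⁻ x in Set.Ioo s T, (‖f x‖₊ : ℝ≥0∞) ^ (2:ℝ)) ^ (1/(2:ℝ)) := by
    intro f
    rw [eLpNorm_eq_lintegral_rpow_enorm_toReal (by norm_num) (by norm_num)]
    norm_num
    rfl
  have hle : eLpNorm (GH H s T g') 2 (volume.restrict (Set.Ioo s T))
      ≤ ENNReal.ofReal (cH H * (T - s) ^ (H - 1/2)) *
        eLpNorm g' 2 (volume.restrict (Set.Ioo s T)) := by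
    rw [hsnorm, hsnorm]
    calc (∫⁻ τ in Set.Ioo s T, (‖GH H s T g' τ‖₊ : ℝ≥0∞) ^ (2:ℝ)) ^ (1/(2:ℝ))
        ≤ ((ENNReal.ofReal (cH H * (T - s) ^ (H - 1/2))) ^ (2:ℝ) *
            ∫⁻ t in Set.Ioo s T, (‖g' t‖₊ : ℝ≥0∞) ^ (2:ℝ)) ^ (1/(2:ℝ)) :=
          ENNReal.rpow_le_rpow hmain (by norm_num)
      _ = ENNReal.ofReal (cH H * (T - s) ^ (H - 1/2)) *
            (∫⁻ t in Set.Ioo s T, (‖g' t‖₊ : ℝ≥0∞) ^ (2:ℝ)) ^ (1/(2:ℝ)) := by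
          rw [ENNReal.mul_rpow_of_nonneg _ _ (by norm_num : (0:ℝ) ≤ 1/2),
            ← ENNReal.rpow_mul]
          norm_num
  have heq1 : eLpNorm (GH H s T g) 2 (volume.restrict (Set.Ioo s T))
      = eLpNorm (GH H s T g') 2 (volume.restrict (Set.Ioo s T)) := eLpNorm_congr_ae hGHeq
  have heq2 : eLpNorm g' 2 (volume.restrict (Set.Ioo s T))
      = eLpNorm g 2 (volume.restrict (Set.Ioo s T)) := eLpNorm_congr_ae hgg'.symm
  have hfinal : eLpNorm (GH H s T g) 2 (volume.restrict (Set.Ioo s T))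
      ≤ ENNReal.ofReal (cH H * (T - s) ^ (H - 1/2)) *
        eLpNorm g 2 (volume.restrict (Set.Ioo s T)) := by
    rw [heq1, ← heq2]
    exact hle
  refine ⟨⟨((GH_meas H s T g' hg'm).stronglyMeasurable).aestronglyMeasurable.congr hGHeq.symm,
    ?_⟩, hfinal⟩
  exact lt_of_le_of_lt hfinal (ENNReal.mul_lt_top ENNReal.ofReal_lt_top hg.2)
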